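/- arXiv:1505.06666 — 6 statements merged into one kernel-verified Lean document; each statement's English description precedes it below -/
import Mathlib

section
/- Let A be an associative unital algebra over a field, q a central unit, e, g ∈ A with e² = e, e·g = g·e, g² = 1 + (q - q⁻¹)·e·g, and suppose q + q⁻¹ ≠ 0. Then for every odd natural number r, g^r = (1 - e)·g + ((q^r + q^{-r})/(q + q^{-1}))·e·g + ((q^{r-1} - q^{-(r-1)})/(q + q^{-1}))·e. -/
/-- Odd-power formula for a Yokonuma–Hecke generator: if `e² = e`, `e·g = g·e`,
`g² = 1 + (q - q⁻¹)·e·g` and `q + q⁻¹ ≠ 0`, then for odd `r`,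
`g^r = (1-e)·g + ((q^r + q^{-r})/(q+q⁻¹))·e·g + ((q^{r-1} - q^{-(r-1)})/(q+q⁻¹))·e`. -/
theorem yokonuma_generator_odd_power {K : Type*} [Field K] {A : Type*} [Ring A] [Algebra K A]
    (q : K) (hq : q ≠ 0) (hq2 : q + q⁻¹ ≠ 0)
    (e g : A) (he : e * e = e) (heg : e * g = g * e)
    (hquad : g ^ 2 = 1 + (q - q⁻¹) • (e * g)) :
    ∀ r : ℕ, Odd r →
      g ^ r = (1 - e) * g + ((q ^ r + q⁻¹ ^ r) / (q + q⁻¹)) • (e * g)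
        + ((q ^ r * q⁻¹ - q⁻¹ ^ r * q) / (q + q⁻¹)) • e := by
  have hq21 : q ^ 2 + 1 ≠ 0 := by
    intro h
    apply hq2
    have : q + q⁻¹ = (q ^ 2 + 1) * q⁻¹ := by field_simp
    rw [this, h, zero_mul]
  set c := q - q⁻¹ with hc
  have hA : g * (e * g) = e + c • (e * g) := by
    calc g * (e * g) = e * g ^ 2 := by rw [← mul_assoc, ← heg, mul_assoc, ← pow_two]
    _ = e + c • (e * g) := by
        rw [hquad]; rw [mul_add, mul_one, mul_smul_comm, ← mul_assoc, he]
  have hB : e * (e * g) = e * g := by rw [← mul_assoc, he]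
  have hD : e * g * (e * g) = e + c • (e * g) := by
    rw [mul_assoc, hA, mul_add, he, mul_smul_comm, hB]
  have hC : (1 - e) * g * (e * g) = 0 := by
    rw [mul_assoc, hA, mul_add, mul_smul_comm, sub_mul, one_mul, he, sub_self,
      sub_mul, one_mul, hB, sub_self, smul_zero, add_zero]
  have step : ∀ a d : K, ((1 - e) * g + a • (e * g) + d • e) * g ^ 2
      = (1 - e) * g + (a + c * (c * a + d)) • (e * g) + (d + c * a) • e := by
    intro a d
    rw [hquad]
    simp only [mul_add, mul_one, add_mul, mul_smul_comm, smul_mul_assoc, smul_smul,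
      hC, hD, hB, smul_add, smul_zero]
    match_scalars <;> ring
  have key : ∀ k : ℕ, g ^ (2*k+1) = (1 - e) * g
      + ((q ^ (2*k+1) + q⁻¹ ^ (2*k+1)) / (q + q⁻¹)) • (e * g)
      + ((q ^ (2*k+1) * q⁻¹ - q⁻¹ ^ (2*k+1) * q) / (q + q⁻¹)) • e := by
    intro k
    induction k with
    | zero =>
      simp only [Nat.mul_zero, Nat.zero_add, pow_one, sub_mul, one_mul]
      have h1 : (q + q⁻¹) / (q + q⁻¹) = 1 := div_self hq2
      have h2 : q * q⁻¹ - q⁻¹ * q = 0 := by field_simp; ring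
      rw [h1, h2, zero_div, zero_smul, add_zero, one_smul]
      abel
    | succ k ih =>
      have hpow : g ^ (2*(k+1)+1) = g ^ (2*k+1) * g ^ 2 := by
        rw [← pow_add]; ring_nf
      have hx : q ^ (2*k+1) ≠ 0 := pow_ne_zero _ hq
      have hexp : 2*(k+1)+1 = (2*k+1)+2 := by ring
      have sc1 : (q ^ (2*k+1) + q⁻¹ ^ (2*k+1)) / (q + q⁻¹)
          + c * (c * ((q ^ (2*k+1) + q⁻¹ ^ (2*k+1)) / (q + q⁻¹))
            + (q ^ (2*k+1) * q⁻¹ - q⁻¹ ^ (2*k+1) * q) / (q + q⁻¹))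
          = (q ^ (2*(k+1)+1) + q⁻¹ ^ (2*(k+1)+1)) / (q + q⁻¹) := by
        rw [hexp, pow_add q (2*k+1) 2, pow_add q⁻¹ (2*k+1) 2, hc]
        simp only [mul_div_assoc', ← add_div]
        congr 1
        field_simp
        ring
      have sc2 : (q ^ (2*k+1) * q⁻¹ - q⁻¹ ^ (2*k+1) * q) / (q + q⁻¹)
          + c * ((q ^ (2*k+1) + q⁻¹ ^ (2*k+1)) / (q + q⁻¹))
          = (q ^ (2*(k+1)+1) * q⁻¹ - q⁻¹ ^ (2*(k+1)+1) * q) / (q + q⁻¹) := by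
        rw [hexp, pow_add q (2*k+1) 2, pow_add q⁻¹ (2*k+1) 2, hc]
        simp only [mul_div_assoc', ← add_div]
        congr 1
        field_simp
        ring
      rw [hpow, ih, step, sc1, sc2]
  intro r hr
  obtain ⟨k, hk⟩ := hr
  rw [hk] at *
  exact key k
end

section
/- Let A be an associative unital algebra over a field, q a central unit, e, g ∈ A with e² = e, e·g = g·e, g² = 1 + (q - q⁻¹)·e·g, and suppose q + q⁻¹ ≠ 0. Then for every even natural number r, g^r = (1 - e) + ((q^r - q^{-r})/(q + q^{-1}))·e·g + ((q^{r-1} + q^{-(r-1)})/(q + q^{-1}))·e. -/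
/-- Even-power formula for a Yokonuma–Hecke generator: if `e² = e`, `e·g = g·e`,
`g² = 1 + (q - q⁻¹)·e·g` and `q + q⁻¹ ≠ 0`, then for even `r`,
`g^r = (1-e) + ((q^r - q^{-r})/(q+q⁻¹))·e·g + ((q^{r-1} + q^{-(r-1)})/(q+q⁻¹))·e`. -/
theorem yokonuma_generator_even_power {K : Type*} [Field K] {A : Type*} [Ring A] [Algebra K A]
    (q : K) (hq : q ≠ 0) (hq2 : q + q⁻¹ ≠ 0)
    (e g : A) (he : e * e = e) (heg : e * g = g * e)
    (hquad : g ^ 2 = 1 + (q - q⁻¹) • (e * g)) :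
    ∀ r : ℕ, Even r →
      g ^ r = (1 - e) + ((q ^ r - q⁻¹ ^ r) / (q + q⁻¹)) • (e * g)
        + ((q ^ r * q⁻¹ + q⁻¹ ^ r * q) / (q + q⁻¹)) • e := by
  have heeg : e * (e * g) = e * g := by rw [← mul_assoc, he]
  have hXX : (e * g) * (e * g) = e + (q - q⁻¹) • (e * g) := by
    have : (e * g) * (e * g) = e * g ^ 2 := by
      rw [mul_assoc, ← mul_assoc g e g, ← heg, ← mul_assoc, heeg, mul_assoc, ← pow_two]
    rw [this, hquad, mul_add, mul_one, mul_smul_comm, heeg]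
  have key : ∀ k : ℕ, g ^ (k + k) = (1 - e)
      + ((q ^ (k + k) - q⁻¹ ^ (k + k)) / (q + q⁻¹)) • (e * g)
      + ((q ^ (k + k) * q⁻¹ + q⁻¹ ^ (k + k) * q) / (q + q⁻¹)) • e := by
    intro k
    induction k with
    | zero =>
      simp only [Nat.add_zero, pow_zero, sub_self, zero_div, zero_smul, add_zero, one_mul]
      rw [add_comm q⁻¹ q, div_self hq2, one_smul, sub_add_cancel]
    | succ n ih =>
      have h2 : (n + 1) + (n + 1) = (n + n) + 2 := by ring
      rw [h2, pow_add, ih, hquad]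
      rw [add_mul, add_mul, mul_add, mul_add, mul_add, mul_one, mul_one, mul_one,
        smul_mul_assoc, smul_mul_assoc, mul_smul_comm, mul_smul_comm,
        hXX]
      rw [show (1 - e) * (e * g) = 0 by rw [sub_mul, one_mul, heeg, sub_self],
        mul_smul_comm, heeg, smul_zero, add_zero, smul_add, smul_smul]
      have h1 : q ^ 2 + 1 ≠ 0 := by
        intro h
        apply hq2
        field_simp
        linear_combination h
      have h1' : 1 + q ^ 2 ≠ 0 := by rwa [add_comm]
      match_scalars
      · rfl
      · simp only [mul_one, div_mul_eq_mul_div]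
        rw [add_assoc, ← add_div]
        congr 2
        obtain ⟨t, ht, ht0⟩ : ∃ t, (q ^ 2) ^ n = t ∧ t ≠ 0 :=
          ⟨_, rfl, pow_ne_zero _ (pow_ne_zero _ hq)⟩
        simp only [show n + n = 2 * n from (two_mul n).symm, pow_add, pow_mul, inv_pow, ht]
        field_simp
        first
        | ring1
        | (simp only [inv_pow]; field_simp; ring1)
        | (field_simp; ring1)
        | (rw [div_eq_iff (by simp [mul_ne_zero_iff, ht0, hq])]; ring1)
      · simp only [mul_one, div_mul_eq_mul_div, ← add_div]
        congr 1
        obtain ⟨t, ht, ht0⟩ : ∃ t, (q ^ 2) ^ n = t ∧ t ≠ 0 :=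
          ⟨_, rfl, pow_ne_zero _ (pow_ne_zero _ hq)⟩
        simp only [show n + n = 2 * n from (two_mul n).symm, pow_add, pow_mul, inv_pow, ht]
        field_simp
        first
        | ring1
        | (simp only [inv_pow]; field_simp; ring1)
        | (field_simp; ring1)
        | (rw [div_eq_iff (by simp [mul_ne_zero_iff, ht0, hq])]; ring1)
  intro r hr
  obtain ⟨k, rfl⟩ := hr
  exact key k
end

section
/- Let A be an associative unital ring, q a central unit, and let e, g ∈ A satisfy e² = e, e·g = g·e, and g² = 1 + (q - q⁻¹)·e·g. Define g̃ := g + (q - 1)·e·g and u := q². Then g̃² = 1 + (u - 1)·e + (u - 1)·e·g̃. -/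
/-- Change of presentation of the Yokonuma–Hecke algebra: if `g² = 1 + (q - q⁻¹)·e·g`,
then `g̃ := g + (q-1)·e·g` satisfies the old quadratic relation
`g̃² = 1 + (u-1)·e + (u-1)·e·g̃` with `u = q²`. -/
theorem new_to_old_quadratic {A : Type*} [Ring A]
    (q qi e g : A)
    (hq : q * qi = 1) (hq' : qi * q = 1)
    (hqc : ∀ a : A, q * a = a * q) (hqic : ∀ a : A, qi * a = a * qi)
    (he : e * e = e) (heg : e * g = g * e)
    (hquad : g ^ 2 = 1 + (q - qi) * (e * g)) :
    (g + (q - 1) * (e * g)) ^ 2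
      = 1 + (q ^ 2 - 1) * e + (q ^ 2 - 1) * (e * (g + (q - 1) * (e * g))) := by
  -- scalars q-1, q-qi are central
  have hc1 : ∀ a : A, (q - 1) * a = a * (q - 1) := fun a => by
    rw [sub_mul, mul_sub, hqc, one_mul, mul_one]
  have hc2 : ∀ a : A, (q - qi) * a = a * (q - qi) := fun a => by
    rw [sub_mul, mul_sub, hqc, hqic]
  have hgg : g * g = 1 + (q - qi) * (e * g) := by rw [← sq, hquad]
  have hee : e * (e * g) = e * g := by rw [← mul_assoc, he]
  -- e * (g*g) in normal form
  have hegg : e * (g * g) = e + (q - qi) * (e * g) := by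
    rw [hgg, mul_add, mul_one, ← mul_assoc, ← hc2 e, mul_assoc, hee]
  have hx : (e * g) * (e * g) = e * (g * g) := by
    rw [mul_assoc e g (e * g), ← mul_assoc g e g, ← heg, ← mul_assoc,
      ← mul_assoc, he, mul_assoc]
  -- cross terms
  have t2 : g * ((q - 1) * (e * g)) = (q - 1) * (e * (g * g)) := by
    rw [← mul_assoc, ← hc1 g, mul_assoc]
    congr 1
    rw [← mul_assoc, ← heg, mul_assoc]
  have t3 : ((q - 1) * (e * g)) * g = (q - 1) * (e * (g * g)) := by
    rw [mul_assoc, mul_assoc]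
  have t4 : ((q - 1) * (e * g)) * ((q - 1) * (e * g))
      = (q - 1) * ((q - 1) * (e * (g * g))) := by
    rw [mul_assoc, ← mul_assoc (e * g) (q - 1), ← hc1 (e * g), mul_assoc,
      hx]
  -- RHS simplification: e * g̃ = q * (e*g)
  have hrhs : e * (g + (q - 1) * (e * g)) = q * (e * g) := by
    rw [mul_add, ← mul_assoc, ← hc1 e, mul_assoc, hee]
    noncomm_ring
  have expand : (g + (q - 1) * (e * g)) ^ 2
      = g * g + (q - 1) * (e * (g * g)) + ((q - 1) * (e * (g * g))
          + (q - 1) * ((q - 1) * (e * (g * g)))) := by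
    rw [sq, add_mul, mul_add, mul_add, t2, t3, t4]
  rw [expand, hegg, hgg, hrhs]
  -- scalar identity: (q²-1)·q equals the accumulated coefficient of e·g
  have hs : (q ^ 2 - 1) * q
      = (q - qi) + ((q - 1) * (q - qi) + ((q - 1) * (q - qi)
          + (q - 1) * ((q - 1) * (q - qi)))) := by
    have h1 : q * q * qi = q := by rw [mul_assoc, hq, mul_one]
    have h2 : (q - qi) + ((q - 1) * (q - qi) + ((q - 1) * (q - qi)
        + (q - 1) * ((q - 1) * (q - qi)))) = q * q * q - q * q * qi := by
      noncomm_ring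
    rw [h2, h1]
    noncomm_ring
  rw [← mul_assoc (q ^ 2 - 1) q, hs]
  noncomm_ring
end

section
/- Let d be a positive natural number and G = ZMod d × ZMod d × ZMod d with generators t₁ = (1,0,0), t₂ = (0,1,0), t₃ = (0,0,1) in ℂ[G]. Define e_{i,k} := (1/d)·∑_{s=0}^{d-1} tᵢ^s·t_k^{d-s} for i < k. Then e_{1,3}·e_{2,3} = e_{1,2}·e_{2,3}. -/
open Finset

/-- In the group algebra `ℂ[(ℤ/dℤ)³]`, with
`e_{i,k} = (1/d)·∑_{s=0}^{d-1} tᵢ^s·t_k^{d-s}`, one has `e_{1,3}·e_{2,3} = e_{1,2}·e_{2,3}`. -/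
theorem eik_product_relation (d : ℕ) (hd : 0 < d)
    (t₁ t₂ t₃ : AddMonoidAlgebra ℂ (ZMod d × ZMod d × ZMod d))
    (ht₁ : t₁ = AddMonoidAlgebra.single ((1 : ZMod d), (0 : ZMod d), (0 : ZMod d)) 1)
    (ht₂ : t₂ = AddMonoidAlgebra.single ((0 : ZMod d), (1 : ZMod d), (0 : ZMod d)) 1)
    (ht₃ : t₃ = AddMonoidAlgebra.single ((0 : ZMod d), (0 : ZMod d), (1 : ZMod d)) 1)
    (e₁₂ e₁₃ e₂₃ : AddMonoidAlgebra ℂ (ZMod d × ZMod d × ZMod d))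
    (he₁₂ : e₁₂ = (1 / (d : ℂ)) • ∑ s ∈ Finset.range d, t₁ ^ s * t₂ ^ (d - s))
    (he₁₃ : e₁₃ = (1 / (d : ℂ)) • ∑ s ∈ Finset.range d, t₁ ^ s * t₃ ^ (d - s))
    (he₂₃ : e₂₃ = (1 / (d : ℂ)) • ∑ s ∈ Finset.range d, t₂ ^ s * t₃ ^ (d - s)) :
    e₁₃ * e₂₃ = e₁₂ * e₂₃ := by
  set E : AddMonoidAlgebra ℂ (ZMod d × ZMod d × ZMod d) :=
    ∑ s ∈ Finset.range d, t₂ ^ s * t₃ ^ (d - s) with hE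
  have ht2d : t₂ ^ d = 1 := by
    rw [ht₂, AddMonoidAlgebra.single_pow]
    simp [Prod.smul_mk, nsmul_eq_mul, AddMonoidAlgebra.one_def]
    rfl
  have ht3d : t₃ ^ d = 1 := by
    rw [ht₃, AddMonoidAlgebra.single_pow]
    simp [Prod.smul_mk, nsmul_eq_mul, AddMonoidAlgebra.one_def]
    rfl
  -- key: t₂ * E = t₃ * E
  have key : t₂ * E = t₃ * E := by
    have h1 : t₂ * E = ∑ s ∈ Finset.range d, t₂ ^ (s + 1) * t₃ ^ (d - s) := by
      rw [hE, Finset.mul_sum]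
      refine Finset.sum_congr rfl fun s _ => ?_
      rw [pow_succ]
      ring
    have h2 : t₃ * E = ∑ s ∈ Finset.range d, t₂ ^ s * t₃ ^ (d - s + 1) := by
      rw [hE, Finset.mul_sum]
      refine Finset.sum_congr rfl fun s hs => ?_
      rw [pow_succ]
      ring
    have h3 : ∀ s ∈ Finset.range d, t₂ ^ (s + 1) * t₃ ^ (d - s) =
        t₂ ^ (s + 1) * t₃ ^ (d - (s + 1) + 1) := by
      intro s hs
      have hs' : s < d := Finset.mem_range.mp hs
      have : d - s = d - (s + 1) + 1 := by omega
      rw [this]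
    rw [h1, Finset.sum_congr rfl h3, h2]
    have hshift := Finset.sum_range_succ' (fun s => t₂ ^ s * t₃ ^ (d - s + 1)) d
    have hd0 : t₂ ^ d * t₃ ^ (d - d + 1) = t₂ ^ 0 * t₃ ^ (d - 0 + 1) := by
      rw [ht2d]
      simp only [Nat.sub_self, Nat.sub_zero, pow_zero, one_mul]
      rw [pow_succ, pow_succ, ht3d]
      simp
    have := Finset.sum_range_succ (fun s => t₂ ^ s * t₃ ^ (d - s + 1)) d
    -- ∑_{s∈range d} f(s+1) = ∑_{s∈range d} f(s)
    calc ∑ s ∈ Finset.range d, t₂ ^ (s + 1) * t₃ ^ (d - (s + 1) + 1)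
        = ∑ s ∈ Finset.range (d + 1), t₂ ^ s * t₃ ^ (d - s + 1)
            - t₂ ^ 0 * t₃ ^ (d - 0 + 1) := by rw [hshift]; ring
      _ = ∑ s ∈ Finset.range d, t₂ ^ s * t₃ ^ (d - s + 1) := by
            rw [Finset.sum_range_succ, hd0]; ring
  have keypow : ∀ n : ℕ, t₂ ^ n * E = t₃ ^ n * E := by
    intro n
    induction n with
    | zero => simp
    | succ n ih =>
      calc t₂ ^ (n + 1) * E = t₂ ^ n * (t₂ * E) := by rw [pow_succ]; ring
        _ = t₂ ^ n * (t₃ * E) := by rw [key]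
        _ = t₃ * (t₂ ^ n * E) := by ring
        _ = t₃ * (t₃ ^ n * E) := by rw [ih]
        _ = t₃ ^ (n + 1) * E := by rw [pow_succ]; ring
  rw [he₁₂, he₁₃, he₂₃, smul_mul_assoc, smul_mul_assoc, mul_smul_comm, mul_smul_comm]
  apply congrArg ((1 / (d : ℂ)) • ·)
  apply congrArg ((1 / (d : ℂ)) • ·)
  rw [Finset.sum_mul, Finset.sum_mul]
  refine Finset.sum_congr rfl fun s _ => ?_
  rw [mul_assoc, mul_assoc, keypow]
end

section
/- Let d ≥ 1, let ω := exp(2πi/d) ∈ ℂ, and let D be a nonempty subset of ℤ/dℤ. Define x_k := (1/|D|)·∑_{a ∈ D} ω^{a·k} for k ∈ ℤ/dℤ. Then x₀ = 1 and the x_k satisfy the E-system: for all k ∈ {1, …, d-1}, ∑_{s=0}^{d-1} x_{k+s}·x_{d-s} = x_k·∑_{s=0}^{d-1} x_s·x_{d-s}, subscripts modulo d. -/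
open Finset

/-- Gérardin solutions of the E-system: with `ω = exp(2πi/d)`, a nonempty `D ⊆ ℤ/dℤ` and
`x_k = (1/|D|)·∑_{a ∈ D} ω^{a·k}`, one has `x₀ = 1` and the E-system holds. -/
theorem gerardin_solution_E_system (d : ℕ) (hd : 1 ≤ d)
    (D : Finset (ZMod d)) (hD : D.Nonempty)
    (ω : ℂ) (hω : ω = Complex.exp (2 * Real.pi * Complex.I / d))
    (x : ZMod d → ℂ)
    (hx : ∀ k : ZMod d, x k = (1 / (D.card : ℂ)) * ∑ a ∈ D, ω ^ (a.val * k.val)) :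
    x 0 = 1 ∧
      ∀ k : ZMod d, k ≠ 0 →
        ∑ s ∈ Finset.range d, x (k + (s : ZMod d)) * x ((d : ZMod d) - (s : ZMod d))
          = x k * ∑ s ∈ Finset.range d, x ((s : ZMod d)) * x ((d : ZMod d) - (s : ZMod d)) := by
  have hd0 : d ≠ 0 := by omega
  haveI : NeZero d := ⟨hd0⟩
  have hprim : IsPrimitiveRoot ω d := hω ▸ Complex.isPrimitiveRoot_exp d hd0
  have hωd : ω ^ d = 1 := hprim.pow_eq_one
  have hmod : ∀ n : ℕ, ω ^ (n % d) = ω ^ n := by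
    intro n
    conv_rhs => rw [← Nat.mod_add_div n d]
    rw [pow_add, pow_mul, hωd, one_pow, mul_one]
  set e : ZMod d → ℂ := fun m => ω ^ m.val with he
  have e_add : ∀ u v : ZMod d, e (u + v) = e u * e v := by
    intro u v
    simp only [he, ZMod.val_add, hmod, pow_add]
  set c : ℂ := (D.card : ℂ) with hc_def
  have hc : c ≠ 0 := by
    have : 0 < D.card := Finset.card_pos.mpr hD
    simp only [hc_def]
    exact_mod_cast this.ne'
  have hx' : ∀ k : ZMod d, x k = (1 / c) * ∑ a ∈ D, e (a * k) := by
    intro k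
    rw [hx]
    congr 1
    refine Finset.sum_congr rfl fun a _ => ?_
    simp only [he, ZMod.val_mul, hmod]
  have hsum : ∀ k : ZMod d, ∑ a ∈ D, e (a * k) = c * x k := by
    intro k
    rw [hx']
    field_simp
  have hbij : ∀ g : ZMod d → ℂ, ∑ t : ZMod d, g t = ∑ s ∈ Finset.range d, g (s : ZMod d) := by
    intro g
    refine Finset.sum_bij (fun t _ => t.val) (fun t _ => Finset.mem_range.mpr t.val_lt)
      (fun t₁ _ t₂ _ h => ZMod.val_injective d h) (fun s hs => ?_) (fun t _ => ?_)
    · exact ⟨(s : ZMod d), Finset.mem_univ _, ZMod.val_natCast_of_lt (Finset.mem_range.mp hs)⟩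
    · rw [ZMod.natCast_rightInverse t]
  have char : ∀ m : ZMod d, ∑ t : ZMod d, e (m * t) = if m = 0 then (d : ℂ) else 0 := by
    intro m
    have hterm : ∀ t : ZMod d, e (m * t) = (ω ^ m.val) ^ t.val := by
      intro t
      simp only [he, ZMod.val_mul, hmod, pow_mul]
    rw [Finset.sum_congr rfl fun t _ => hterm t]
    have : ∑ t : ZMod d, (ω ^ m.val) ^ t.val = ∑ s ∈ Finset.range d, (ω ^ m.val) ^ s := by
      rw [hbij fun t => (ω ^ m.val) ^ t.val]
      refine Finset.sum_congr rfl fun s hs => ?_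
      rw [ZMod.val_natCast_of_lt (Finset.mem_range.mp hs)]
    rw [this]
    by_cases hm : m = 0
    · simp [hm, ZMod.val_zero]
    · have hv0 : 0 < m.val := Nat.pos_of_ne_zero fun h => hm ((ZMod.val_eq_zero m).mp h)
      have hne1 : ω ^ m.val ≠ 1 := hprim.pow_ne_one_of_pos_of_lt hv0.ne' m.val_lt
      have hzd : (ω ^ m.val) ^ d = 1 := by
        rw [← pow_mul, mul_comm, pow_mul, hωd, one_pow]
      rw [geom_sum_eq hne1, hzd, if_neg hm]
      simp
  have key : ∀ k : ZMod d,
      ∑ s ∈ Finset.range d, x (k + (s : ZMod d)) * x ((d : ZMod d) - (s : ZMod d))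
        = ((d : ℂ) / c) * x k := by
    intro k
    have h0 : ((d : ℕ) : ZMod d) = 0 := ZMod.natCast_self d
    have step1 : ∑ s ∈ Finset.range d, x (k + (s : ZMod d)) * x ((d : ZMod d) - (s : ZMod d))
        = ∑ t : ZMod d, x (k + t) * x (-t) := by
      rw [hbij fun t => x (k + t) * x (-t)]
      refine Finset.sum_congr rfl fun s _ => ?_
      rw [h0, zero_sub]
    rw [step1]
    have expand : ∀ t : ZMod d, x (k + t) * x (-t)
        = (1 / c) * (1 / c) * ∑ a ∈ D, ∑ b ∈ D, e (a * k) * e ((a - b) * t) := by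
      intro t
      rw [hx' (k + t), hx' (-t), mul_mul_mul_comm]
      congr 1
      rw [Finset.sum_mul_sum]
      refine Finset.sum_congr rfl fun a _ => Finset.sum_congr rfl fun b _ => ?_
      rw [← e_add, ← e_add]
      congr 1
      ring
    rw [Finset.sum_congr rfl fun t _ => expand t, ← Finset.mul_sum]
    rw [Finset.sum_comm]
    have inner : ∀ a ∈ D, ∑ t : ZMod d, ∑ b ∈ D, e (a * k) * e ((a - b) * t)
        = e (a * k) * (d : ℂ) := by
      intro a ha
      rw [Finset.sum_comm]
      have : ∀ b ∈ D, ∑ t : ZMod d, e (a * k) * e ((a - b) * t)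
          = if b = a then e (a * k) * (d : ℂ) else 0 := by
        intro b _
        rw [← Finset.mul_sum, char (a - b)]
        by_cases hab : b = a
        · simp [hab]
        · rw [if_neg (fun h => hab (sub_eq_zero.mp h).symm), if_neg hab, mul_zero]
      rw [Finset.sum_congr rfl this, Finset.sum_ite_eq' D a fun _ => e (a * k) * (d : ℂ),
        if_pos ha]
    rw [Finset.sum_congr rfl inner]
    have : ∑ a ∈ D, e (a * k) * (d : ℂ) = (c * x k) * (d : ℂ) := by
      rw [← Finset.sum_mul, hsum]
    rw [this]
    field_simp
  have hx0 : x 0 = 1 := by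
    rw [hx' 0]
    have : ∀ a ∈ D, e (a * 0) = 1 := by
      intro a _
      simp [he, ZMod.val_zero]
    rw [Finset.sum_congr rfl this, Finset.sum_const, nsmul_eq_mul, mul_one, ← hc_def]
    field_simp
  refine ⟨hx0, fun k _ => ?_⟩
  have rhs : ∑ s ∈ Finset.range d, x ((s : ZMod d)) * x ((d : ZMod d) - (s : ZMod d))
      = (d : ℂ) / c := by
    have := key 0
    simp only [zero_add] at this
    rw [this, hx0, mul_one]
  rw [key k, rhs]
  ring
end

section
/- Let d ≥ 1, ω := exp(2πi/d), and D a nonempty subset of ℤ/dℤ. With x_k := (1/|D|)·∑_{a ∈ D} ω^{a·k} for k ∈ ℤ/dℤ, one has (1/d)·∑_{s=0}^{d-1} x_s·x_{d-s} = 1/|D|. -/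
open Finset


/-- The trace of the idempotent at a Gérardin solution of the E-system:
`(1/d)·∑_{s=0}^{d-1} x_s·x_{d-s} = 1/|D|`. -/
theorem E_D_value (d : ℕ) (hd : 1 ≤ d)
    (D : Finset (ZMod d)) (hD : D.Nonempty)
    (ω : ℂ) (hω : ω = Complex.exp (2 * Real.pi * Complex.I / d))
    (x : ZMod d → ℂ)
    (hx : ∀ k : ZMod d, x k = (1 / (D.card : ℂ)) * ∑ a ∈ D, ω ^ (a.val * k.val)) :
    (1 / (d : ℂ)) * ∑ s ∈ Finset.range d, x ((s : ZMod d)) * x ((d : ZMod d) - (s : ZMod d))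
      = 1 / (D.card : ℂ) := by
  haveI : NeZero d := ⟨by omega⟩
  have hdC : (d : ℂ) ≠ 0 := Nat.cast_ne_zero.mpr (by omega)
  have hDcard : D.card ≠ 0 := Finset.card_ne_zero.mpr hD
  have hDC : (D.card : ℂ) ≠ 0 := Nat.cast_ne_zero.mpr hDcard
  have hprim : IsPrimitiveRoot ω d := by
    rw [hω]; exact Complex.isPrimitiveRoot_exp d (by omega)
  have hω1 : ω ^ d = 1 := hprim.pow_eq_one
  have hpow : ∀ m : ℕ, ω ^ m = ω ^ ((m : ZMod d)).val := by
    intro m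
    rw [pow_eq_pow_mod m hω1, ZMod.val_natCast]
  have hterm : ∀ (a b : ZMod d) (s : ℕ),
      ω ^ (a.val * ((s : ZMod d)).val) * ω ^ (b.val * ((-(s : ZMod d)) : ZMod d).val)
        = (ω ^ ((a - b).val)) ^ s := by
    intro a b s
    rw [← pow_mul, ← pow_add, hpow, hpow ((a - b).val * s)]
    congr 2
    push_cast [ZMod.natCast_val, ZMod.cast_id]
    ring
  have hgeom : ∀ (a b : ZMod d), a ∈ D → b ∈ D →
      ∑ s ∈ Finset.range d, (ω ^ ((a - b).val)) ^ s = if a = b then (d : ℂ) else 0 := by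
    intro a b _ _
    by_cases h : a = b
    · simp [h, ZMod.val_zero]
    · have hc : (a - b).val ≠ 0 := by
        simpa [ZMod.val_eq_zero, sub_eq_zero] using h
      have hne : ω ^ ((a - b).val) ≠ 1 :=
        hprim.pow_ne_one_of_pos_of_lt hc (ZMod.val_lt _)
      rw [geom_sum_eq hne, if_neg h]
      rw [← pow_mul, mul_comm, pow_mul, hω1, one_pow]
      simp
  have hstep : ∀ s ∈ Finset.range d,
      x ((s : ZMod d)) * x ((d : ZMod d) - (s : ZMod d))
        = (1 / (D.card : ℂ)) * (1 / (D.card : ℂ)) *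
            ∑ a ∈ D, ∑ b ∈ D, (ω ^ ((a - b).val)) ^ s := by
    intro s _
    have h0 : ((d : ZMod d) - (s : ZMod d)) = -(s : ZMod d) := by
      simp [ZMod.natCast_self]
    rw [h0, hx, hx, mul_mul_mul_comm, Finset.sum_mul_sum]
    congr 1
    exact Finset.sum_congr rfl fun a _ => Finset.sum_congr rfl fun b _ => hterm a b s
  calc (1 / (d : ℂ)) * ∑ s ∈ Finset.range d, x ((s : ZMod d)) * x ((d : ZMod d) - (s : ZMod d))
      = (1 / (d : ℂ)) * ∑ s ∈ Finset.range d, ((1 / (D.card : ℂ)) * (1 / (D.card : ℂ)) *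
          ∑ a ∈ D, ∑ b ∈ D, (ω ^ ((a - b).val)) ^ s) := by
        rw [Finset.sum_congr rfl hstep]
    _ = (1 / (d : ℂ)) * ((1 / (D.card : ℂ)) * (1 / (D.card : ℂ)) *
          ∑ a ∈ D, ∑ b ∈ D, ∑ s ∈ Finset.range d, (ω ^ ((a - b).val)) ^ s) := by
        rw [← Finset.mul_sum]
        congr 2
        rw [Finset.sum_comm]
        exact Finset.sum_congr rfl fun a _ => Finset.sum_comm
    _ = (1 / (d : ℂ)) * ((1 / (D.card : ℂ)) * (1 / (D.card : ℂ)) * ((D.card : ℂ) * d)) := by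
        congr 2
        rw [Finset.sum_congr rfl (fun a ha => Finset.sum_congr rfl (fun b hb => hgeom a b ha hb))]
        simp [Finset.sum_ite_eq, mul_comm]
    _ = 1 / (D.card : ℂ) := by field_simp
end
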